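/- In the Hecke algebra H_n(q), the Murphy operators L_p = Σ_{k=1}^{p-1} q^{-(p-1-k)} g_k g_{k+1} ⋯ g_{p-2} g_{p-1} g_{p-2} ⋯ g_{k+1} g_k (p = 2,...,n) pairwise commute: L_p L_r = L_r L_p for all p, r. -/

import Mathlib

/-- The Murphy operator
`L_p = Σ_{k=1}^{p-1} q^{-(p-1-k)} g_k g_{k+1} ⋯ g_{p-2} g_{p-1} g_{p-2} ⋯ g_{k+1} g_k`
in the Hecke algebra generated by the `g i`. -/
noncomputable def murphy {A : Type*} [Ring A] [Algebra ℂ A] (q : ℂ) (g : ℕ → A)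
    (p : ℕ) : A :=
  ∑ k ∈ Finset.Ico 1 p, (q ^ (p - 1 - k))⁻¹ •
    (((List.range' k (p - k)).map g).prod *
      (((List.range' k (p - 1 - k)).reverse.map g).prod))

section MurphyAux

set_option linter.unusedSectionVars false
set_option linter.unusedVariables false

variable {A : Type*} [Ring A] [Algebra ℂ A]

lemma core (q : ℂ) (hq : q ≠ 0) (s t K L M : A)
    (hb : s * t * s = t * s * t)
    (hs2 : s * s = (q - 1) • s + q • (1 : A))
    (hKt : t * K = K * t)
    (hL : L = s + q⁻¹ • (s * K * s))
    (hM : M = t + q⁻¹ • (t * L * t))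
    (hKL : K * L = L * K) :
    L * M = M * L := by
  have hb' : s * (t * s) = t * (s * t) := by rw [← mul_assoc, ← mul_assoc, hb]
  set X : A := s * (K * s) + q • s with hXdef
  have hX : q • L = X := by
    rw [hL, smul_add, smul_smul, mul_inv_cancel₀ hq, one_smul, mul_assoc, hXdef, add_comm]
  set Y : A := t * (s * (K * (s * t))) + q • (t * (s * t)) + (q ^ 2) • t with hYdef
  have hY : (q ^ 2) • M = Y := by
    have h1 : q • (t * L * t) = t * (s * (K * (s * t))) + q • (t * (s * t)) := by
      calc q • (t * L * t) = t * (q • L) * t := by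
            rw [mul_smul_comm, smul_mul_assoc]
        _ = t * X * t := by rw [hX]
        _ = t * (s * (K * (s * t))) + q • (t * (s * t)) := by
            rw [hXdef]; rw [mul_add, add_mul, mul_smul_comm, smul_mul_assoc]
            simp only [mul_assoc]
    rw [hM, smul_add, smul_smul, show q ^ 2 * q⁻¹ = q by field_simp, h1, hYdef]
    abel
  -- the relation coming from K * L = L * K
  have hKX : K * X = X * K := by rw [← hX, mul_smul_comm, smul_mul_assoc, hKL]
  have R1 : K * (s * (K * s)) + q • (K * s) = s * (K * (s * K)) + q • (s * K) := by
    have h := hKX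
    rw [hXdef, mul_add, add_mul, mul_smul_comm, smul_mul_assoc] at h
    simpa only [mul_assoc] using h
  have hKsKs : K * (s * (K * s)) = s * (K * (s * K)) + q • (s * K) - q • (K * s) := by
    rw [eq_sub_iff_add_eq]; exact R1
  -- E identities
  have E1 : s * (t * (s * t)) = (q - 1) • (s * (t * s)) + q • (t * s) := by
    rw [← hb', ← mul_assoc s s, hs2, add_mul, smul_mul_assoc, smul_mul_assoc, one_mul]
  have E2 : t * (s * (t * s)) = (q - 1) • (s * (t * s)) + q • (s * t) := by
    have h0 : t * (s * (t * s)) = t * (s * t) * s := by simp only [mul_assoc]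
    rw [h0, ← hb']
    simp only [mul_assoc]
    rw [hs2, mul_add, mul_add, mul_smul_comm, mul_smul_comm, mul_smul_comm, mul_smul_comm,
      mul_one]
  have E3 : s * (K * (s * (t * (s * t)))) =
      (q - 1) • (s * (K * (s * (t * s)))) + q • (s * (K * (t * s))) := by
    rw [← hb', show s * (s * (t * s)) = (s * s) * (t * s) from (mul_assoc _ _ _).symm, hs2,
      add_mul, smul_mul_assoc, smul_mul_assoc, one_mul]
    rw [mul_add, mul_add, mul_smul_comm, mul_smul_comm, mul_smul_comm, mul_smul_comm]
  have E4 : t * (s * (t * (s * (K * s)))) =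
      (q - 1) • (s * (t * (s * (K * s)))) + q • (s * (K * (t * s))) := by
    have h0 : t * (s * (t * (s * (K * s)))) = (t * (s * t)) * (s * (K * s)) := by
      simp only [mul_assoc]
    rw [h0, ← hb']
    simp only [mul_assoc]
    rw [show s * (s * (K * s)) = (s * s) * (K * s) from (mul_assoc _ _ _).symm, hs2, add_mul,
      smul_mul_assoc, smul_mul_assoc, one_mul, mul_add, mul_add, mul_smul_comm, mul_smul_comm,
      mul_smul_comm, mul_smul_comm]
    try simp only [mul_assoc]
    rw [show t * (K * s) = (t * K) * s from (mul_assoc _ _ _).symm, hKt, mul_assoc]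
  have E5 : s * (t * (s * (K * (s * t)))) = t * (s * (K * (s * (t * s)))) := by
    have h0 : s * (t * (s * (K * (s * t)))) = (s * (t * s)) * (K * (s * t)) := by
      simp only [mul_assoc]
    rw [h0, hb']
    simp only [mul_assoc]
    rw [show t * (K * (s * t)) = (t * K) * (s * t) from (mul_assoc _ _ _).symm, hKt, mul_assoc,
      ← hb']
  -- reduction of stsKts and stKsts
  have hA : s * (t * (s * (K * (t * s)))) =
      (q - 1) • (s * (t * (s * (K * s)))) + q • (t * (s * (K * s))) := by
    rw [show K * (t * s) = (K * t) * s from (mul_assoc _ _ _).symm, ← hKt, mul_assoc]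
    have h0 : s * (t * (s * (t * (K * s)))) = (s * (t * (s * t))) * (K * s) := by
      simp only [mul_assoc]
    rw [h0, E1, add_mul, smul_mul_assoc, smul_mul_assoc]
    simp only [mul_assoc]
  have hB : s * (t * (K * (s * (t * s)))) =
      (q - 1) • (s * (K * (s * (t * s)))) + q • (s * (K * (s * t))) := by
    rw [show t * (K * (s * (t * s))) = (t * K) * (s * (t * s)) from (mul_assoc _ _ _).symm,
      hKt, mul_assoc, E2]
    rw [mul_add, mul_smul_comm, mul_smul_comm, mul_add, mul_smul_comm, mul_smul_comm]
    try simp only [mul_assoc]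
  -- utut
  have E7 : s * (K * (s * (t * (s * (K * (s * t)))))) =
      s * (t * (s * (K * (s * (K * (t * s)))))) + (q * (q - 1)) • (s * (t * (s * (K * s))))
        + (q ^ 2) • (t * (s * (K * s))) - (q * (q - 1)) • (s * (K * (s * (t * s))))
        - (q ^ 2) • (s * (K * (s * t))) := by
    rw [E5]
    rw [show K * (t * (s * (K * (s * (t * s))))) = (K * t) * (s * (K * (s * (t * s))))
      from (mul_assoc _ _ _).symm, ← hKt, mul_assoc]
    rw [show K * (s * (K * (s * (t * s)))) = (K * (s * (K * s))) * (t * s) by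
      simp only [mul_assoc]]
    rw [hKsKs, sub_mul, add_mul, smul_mul_assoc, smul_mul_assoc]
    rw [mul_sub, mul_add, mul_smul_comm, mul_smul_comm, mul_sub, mul_add, mul_smul_comm,
      mul_smul_comm]
    simp only [mul_assoc]
    rw [hA, hB]
    rw [smul_add, smul_add, smul_smul, smul_smul, smul_smul, smul_smul]
    rw [show q * q = q ^ 2 by ring]
    abel
  -- tutu
  have E8 : t * (s * (K * (s * (t * (s * (K * s)))))) =
      s * (t * (s * (K * (s * (K * (t * s)))))) := by
    have h0 : t * (s * (K * (s * (t * (s * (K * s)))))) =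
        (t * (s * (K * (s * (t * s))))) * (K * s) := by simp only [mul_assoc]
    rw [h0, ← E5]
    simp only [mul_assoc]
    rw [show t * (K * s) = (t * K) * s from (mul_assoc _ _ _).symm, hKt, mul_assoc]
  -- the key commutation for X and Y
  have key : X * Y = Y * X := by
    rw [hXdef, hYdef]
    simp only [mul_add, add_mul, smul_mul_assoc, mul_smul_comm, smul_smul, smul_add, mul_assoc]
    rw [E7, E8, E5, E3, E4, E1, E2]
    module
  -- conclude
  have h3 : (q ^ 3) • (L * M) = (q ^ 3) • (M * L) := by
    calc (q ^ 3) • (L * M) = (q • L) * ((q ^ 2) • M) := by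
          rw [smul_mul_smul_comm]; ring_nf
      _ = X * Y := by rw [hX, hY]
      _ = Y * X := key
      _ = ((q ^ 2) • M) * (q • L) := by rw [hX, hY]
      _ = (q ^ 3) • (M * L) := by rw [smul_mul_smul_comm]; ring_nf
  have := congrArg (fun z => (q ^ 3)⁻¹ • z) h3
  simpa [inv_smul_smul₀ (pow_ne_zero 3 hq), smul_smul,
    inv_mul_cancel₀ (pow_ne_zero 3 hq)] using this

lemma murphy_one (q : ℂ) (g : ℕ → A) : murphy q g 1 = 0 := by
  simp [murphy]

-- g j commutes with murphy m when j ≥ m + 1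
lemma commute_murphy (q : ℂ) (g : ℕ → A) (n : ℕ)
    (hcm : ∀ i j, 1 ≤ i → j ≤ n - 1 → i + 2 ≤ j → g i * g j = g j * g i)
    (m j : ℕ) (hj : m + 1 ≤ j) (hjn : j ≤ n - 1) :
    Commute (g j) (murphy q g m) := by
  apply Commute.sum_right
  intro k hk
  rw [Finset.mem_Ico] at hk
  apply Commute.smul_right
  apply Commute.mul_right
  · apply Commute.list_prod_right
    intro x hx
    rw [List.mem_map] at hx
    obtain ⟨i, hi, rfl⟩ := hx
    rw [List.mem_range'_1] at hi
    exact (hcm i j (by omega) hjn (by omega)).symm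
  · apply Commute.list_prod_right
    intro x hx
    rw [List.mem_map] at hx
    obtain ⟨i, hi, rfl⟩ := hx
    rw [List.mem_reverse, List.mem_range'_1] at hi
    exact (hcm i j (by omega) hjn (by omega)).symm

-- key word identity
lemma key_word (q : ℂ) (g : ℕ → A) (n : ℕ)
    (hbr : ∀ i, 1 ≤ i → i + 1 ≤ n - 1 →
      g i * g (i + 1) * g i = g (i + 1) * g i * g (i + 1))
    (hcm : ∀ i j, 1 ≤ i → j ≤ n - 1 → i + 2 ≤ j → g i * g j = g j * g i)
    (k e : ℕ) (hk : 1 ≤ k) (hn : k + e + 1 + 1 ≤ n) :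
    g (k + e + 1) * (((List.range' k (e + 1)).map g).prod *
        (((List.range' k e).reverse.map g).prod)) * g (k + e + 1) =
      ((List.range' k (e + 2)).map g).prod * (((List.range' k (e + 1)).reverse.map g).prod) := by
  set m := k + e + 1 with hm
  set W : A := ((List.range' k e).map g).prod with hW
  set W' : A := (((List.range' k e).reverse.map g)).prod with hW'
  have cW : Commute (g m) W := by
    apply Commute.list_prod_right
    intro x hx
    rw [List.mem_map] at hx
    obtain ⟨i, hi, rfl⟩ := hx
    rw [List.mem_range'_1] at hi
    exact (hcm i m (by omega) (by omega) (by omega)).symm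
  have cW' : Commute (g m) W' := by
    apply Commute.list_prod_right
    intro x hx
    rw [List.mem_map] at hx
    obtain ⟨i, hi, rfl⟩ := hx
    rw [List.mem_reverse, List.mem_range'_1] at hi
    exact (hcm i m (by omega) (by omega) (by omega)).symm
  have hbrm : g (k + e) * g m * g (k + e) = g m * g (k + e) * g m := by
    have := hbr (k + e) (by omega) (by omega)
    rw [hm]; exact this
  have h1 : ((List.range' k (e + 1)).map g).prod = W * g (k + e) := by
    rw [List.range'_concat, List.map_append, List.prod_append]
    simp [hW]
  have h2 : ((List.range' k (e + 2)).map g).prod = W * g (k + e) * g m := by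
    rw [show e + 2 = (e + 1) + 1 from rfl, List.range'_concat, List.map_append,
      List.prod_append, h1]
    simp [hm, mul_assoc]
    ring_nf
  have h3 : (((List.range' k (e + 1)).reverse.map g)).prod = g (k + e) * W' := by
    rw [List.range'_concat, List.reverse_append, List.map_append, List.prod_append]
    simp [hW']
  rw [h1, h2, h3]
  calc g m * (W * g (k + e) * W') * g m
      = W * (g m * g (k + e) * g m) * W' := by
        rw [show g m * (W * g (k + e) * W') = g m * W * g (k + e) * W' by
          simp only [mul_assoc]]
        rw [cW.eq, mul_assoc _ W' (g m), ← cW'.eq]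
        simp only [mul_assoc]
    _ = W * (g (k + e) * g m * g (k + e)) * W' := by rw [← hbrm]
    _ = W * g (k + e) * g m * (g (k + e) * W') := by simp only [mul_assoc]

lemma murphy_rec (q : ℂ) (hq : q ≠ 0) (g : ℕ → A) (n : ℕ)
    (hbr : ∀ i, 1 ≤ i → i + 1 ≤ n - 1 →
      g i * g (i + 1) * g i = g (i + 1) * g i * g (i + 1))
    (hcm : ∀ i j, 1 ≤ i → j ≤ n - 1 → i + 2 ≤ j → g i * g j = g j * g i)
    (m : ℕ) (hm : 1 ≤ m) (hmn : m + 1 ≤ n) :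
    murphy q g (m + 1) = g m + q⁻¹ • (g m * murphy q g m * g m) := by
  rw [murphy, murphy, Finset.sum_Ico_succ_top (by omega : 1 ≤ m)]
  have htop : (q ^ (m + 1 - 1 - m))⁻¹ •
      (((List.range' m (m + 1 - m)).map g).prod *
        (((List.range' m (m + 1 - 1 - m)).reverse.map g).prod)) = g m := by
    simp [show m + 1 - 1 - m = 0 by omega, show m + 1 - m = 1 by omega, List.range']
  rw [htop]
  rw [Finset.mul_sum, Finset.sum_mul, Finset.smul_sum, add_comm]
  congr 1
  apply Finset.sum_congr rfl
  intro k hk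
  rw [Finset.mem_Ico] at hk
  obtain ⟨e, rfl⟩ : ∃ e, m = k + e + 1 := ⟨m - k - 1, by omega⟩
  rw [show k + e + 1 + 1 - 1 - k = e + 1 by omega, show k + e + 1 + 1 - k = e + 2 by omega,
    show k + e + 1 - 1 - k = e by omega, show k + e + 1 - k = e + 1 by omega]
  rw [mul_smul_comm, smul_mul_assoc, smul_smul, ← mul_assoc]
  rw [mul_assoc (g (k + e + 1))]
  rw [key_word q g n hbr hcm k e (by omega) hmn]
  congr 1
  rw [pow_succ, mul_inv_rev, mul_comm]

lemma murphy_aux (n : ℕ) (q : ℂ) (hq : q ≠ 0) (g : ℕ → A)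
    (hsq : ∀ i, 1 ≤ i → i ≤ n - 1 → g i ^ 2 = (q - 1) • g i + q • (1 : A))
    (hbr : ∀ i, 1 ≤ i → i + 1 ≤ n - 1 →
      g i * g (i + 1) * g i = g (i + 1) * g i * g (i + 1))
    (hcm : ∀ i j, 1 ≤ i → j ≤ n - 1 → i + 2 ≤ j → g i * g j = g j * g i) :
    ∀ r, r ≤ n → ∀ p, p < r → murphy q g p * murphy q g r = murphy q g r * murphy q g p := by
  intro r
  induction r with
  | zero => intro _ p hp; omega
  | succ r IH =>
    intro hrn p hp
    match r, hp with
    | 0, hp =>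
      have h0 : p = 0 := by omega
      subst h0
      have : murphy q g 0 = 0 := by simp [murphy]
      rw [this, zero_mul, mul_zero]
    | (w+1), hp =>
      have hrec : murphy q g (w + 1 + 1) =
          g (w + 1) + q⁻¹ • (g (w + 1) * murphy q g (w + 1) * g (w + 1)) :=
        murphy_rec q hq g n hbr hcm (w + 1) (by omega) (by omega)
      rcases Nat.lt_or_ge p (w + 1) with hpr | hpr
      · -- p < r: use induction hypothesis
        have c1 : Commute (murphy q g p) (g (w + 1)) :=
          (commute_murphy q g n hcm p (w + 1) (by omega) (by omega)).symm
        have c2 : Commute (murphy q g p) (murphy q g (w + 1)) := IH (by omega) p hpr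
        have : Commute (murphy q g p) (murphy q g (w + 1 + 1)) := by
          rw [hrec]
          exact c1.add_right (((c1.mul_right c2).mul_right c1).smul_right _)
        exact this.eq
      · -- p = r : the diagonal case
        have hpr' : p = w + 1 := by omega
        subst hpr'
        match w with
        | 0 =>
          have : murphy q g 1 = 0 := by simp [murphy]
          rw [this, zero_mul, mul_zero]
        | (v+1) =>
          have hb : g (v+1) * g (v+2) * g (v+1) = g (v+2) * g (v+1) * g (v+2) := by
            have := hbr (v+1) (by omega) (by omega)
            simpa using this
          have hs2 : g (v+1) * g (v+1) = (q - 1) • g (v+1) + q • (1 : A) := by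
            have := hsq (v+1) (by omega) (by omega)
            rwa [pow_two] at this
          have hKt : g (v+2) * murphy q g (v+1) = murphy q g (v+1) * g (v+2) :=
            (commute_murphy q g n hcm (v+1) (v+2) (by omega) (by omega)).eq
          have hL : murphy q g (v+2) =
              g (v+1) + q⁻¹ • (g (v+1) * murphy q g (v+1) * g (v+1)) := by
            have := murphy_rec q hq g n hbr hcm (v+1) (by omega) (by omega)
            simpa using this
          have hM : murphy q g (v+3) =
              g (v+2) + q⁻¹ • (g (v+2) * murphy q g (v+2) * g (v+2)) := by
            have := murphy_rec q hq g n hbr hcm (v+2) (by omega) (by omega)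
            simpa using this
          have hKL : murphy q g (v+1) * murphy q g (v+2) =
              murphy q g (v+2) * murphy q g (v+1) :=
            IH (by omega) (v+1) (by omega)
          have := core q hq (g (v+1)) (g (v+2)) (murphy q g (v+1)) (murphy q g (v+2))
            (murphy q g (v+3)) hb hs2 hKt hL hM hKL
          simpa using this

end MurphyAux

/-- In the Hecke algebra `H_n(q)`, the Murphy operators pairwise commute. -/
theorem stmt8 {A : Type*} [Ring A] [Algebra ℂ A] (n : ℕ) (q : ℂ) (hq : q ≠ 0)
    (g : ℕ → A)
    (hsq : ∀ i, 1 ≤ i → i ≤ n - 1 → g i ^ 2 = (q - 1) • g i + q • (1 : A))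
    (hbr : ∀ i, 1 ≤ i → i + 1 ≤ n - 1 →
      g i * g (i + 1) * g i = g (i + 1) * g i * g (i + 1))
    (hcm : ∀ i j, 1 ≤ i → j ≤ n - 1 → i + 2 ≤ j → g i * g j = g j * g i) :
    ∀ p r, 2 ≤ p → p ≤ n → 2 ≤ r → r ≤ n →
      murphy q g p * murphy q g r = murphy q g r * murphy q g p := by
  intro p r hp hpn hr hrn
  rcases lt_trichotomy p r with h | h | h
  · exact murphy_aux n q hq g hsq hbr hcm r hrn p h
  · rw [h]
  · exact (murphy_aux n q hq g hsq hbr hcm p hpn r h).symm
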